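/- The number of single-peaked (n,m)-elections satisfies a(n,m) ≥ (m!/2) · (2^{(m-1)n} + (2^{m-1}−2)^n − 2·(2^{m-1}−1)^n) for all n, m ≥ 2. -/

import Mathlib

def SPwrt {m : ℕ} (V A : Equiv.Perm (Fin m)) : Prop :=
  ∀ c₁ c₂ c₃ : Fin m, ¬(A c₁ < A c₂ ∧ A c₂ < A c₃ ∧ V c₁ < V c₂ ∧ V c₃ < V c₂)

def SPElection {n m : ℕ} (P : Fin n → Equiv.Perm (Fin m)) : Prop :=
  ∃ A : Equiv.Perm (Fin m), ∀ i, SPwrt (P i) A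

attribute [local instance] Classical.propDecidable

namespace SPaux

lemma perm_apply_inv_self {α : Type*} (f : Equiv.Perm α) (x : α) : f (f⁻¹ x) = x :=
  f.apply_symm_apply x

/-- number of `true`s of `s` below `k` -/
def Lc (s : ℕ → Bool) (k : ℕ) : ℕ := ((Finset.range k).filter (fun j => s j = true)).card
/-- number of `false`s of `s` below `k` -/
def Rc (s : ℕ → Bool) (k : ℕ) : ℕ := ((Finset.range k).filter (fun j => ¬ s j = true)).card

lemma Lc_add_Rc (s : ℕ → Bool) (k : ℕ) : Lc s k + Rc s k = k := by
  simpa [Lc, Rc] using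
    Finset.card_filter_add_card_filter_not (s := Finset.range k)
      (p := fun j => s j = true)

lemma Lc_le (s : ℕ → Bool) (k : ℕ) : Lc s k ≤ k := by
  simpa [Lc] using Finset.card_le_card (Finset.filter_subset _ (Finset.range k))

lemma Rc_le (s : ℕ → Bool) (k : ℕ) : Rc s k ≤ k := by
  simpa [Rc] using Finset.card_le_card (Finset.filter_subset _ (Finset.range k))

lemma Lc_succ_le {s : ℕ → Bool} {k k' : ℕ} (ht : s k = true) (h : k < k') :
    Lc s k + 1 ≤ Lc s k' := by
  have h1 : Lc s (k+1) = Lc s k + 1 := by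
    simp [Lc, Finset.range_add_one, Finset.filter_insert, ht]
  have h2 : Lc s (k+1) ≤ Lc s k' :=
    Finset.card_le_card (Finset.filter_subset_filter _ (Finset.range_subset_range.2 h))
  omega

lemma Rc_succ_le {s : ℕ → Bool} {k k' : ℕ} (ht : s k = false) (h : k < k') :
    Rc s k + 1 ≤ Rc s k' := by
  have h1 : Rc s (k+1) = Rc s k + 1 := by
    simp [Rc, Finset.range_add_one, Finset.filter_insert, ht]
  have h2 : Rc s (k+1) ≤ Rc s k' :=
    Finset.card_le_card (Finset.filter_subset_filter _ (Finset.range_subset_range.2 h))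
  omega

/-- position of the candidate of rank `k` (ranks processed from worst `m-1` downward
conceptually; see property lemmas). -/
def pos (m : ℕ) (s : ℕ → Bool) (k : Fin m) : Fin m :=
  if s k.val = true ∧ k.val < m - 1 then
    ⟨Lc s k.val, lt_of_le_of_lt (Lc_le s k.val) k.isLt⟩
  else
    ⟨m - 1 - Rc s k.val, by have := k.isLt; omega⟩

lemma pos_lt {m : ℕ} {s : ℕ → Bool} {k k' : Fin m} (h : k < k') (ht : s k.val = true) :
    pos m s k < pos m s k' := by
  have hkv : (k : ℕ) < k' := h
  have hk'm : (k' : ℕ) ≤ m - 1 := by have := k'.isLt; omega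
  have hk : (k : ℕ) < m - 1 := lt_of_lt_of_le hkv hk'm
  have hsum : Lc s k'.val + Rc s k'.val = k'.val := Lc_add_Rc s k'.val
  have hmono : Lc s k.val + 1 ≤ Lc s k'.val := Lc_succ_le ht hkv
  rw [Fin.lt_def]
  unfold pos
  rw [if_pos ⟨ht, hk⟩]
  split_ifs with h' <;> simp only <;> omega

lemma pos_gt {m : ℕ} {s : ℕ → Bool} {k k' : Fin m} (h : k < k') (hf : s k.val = false) :
    pos m s k' < pos m s k := by
  have hkv : (k : ℕ) < k' := h
  have hk'm : (k' : ℕ) ≤ m - 1 := by have := k'.isLt; omega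
  have hk : (k : ℕ) < m - 1 := lt_of_lt_of_le hkv hk'm
  have hsum : Lc s k'.val + Rc s k'.val = k'.val := Lc_add_Rc s k'.val
  have hRk : Rc s k.val ≤ k.val := Rc_le s k.val
  have hmono : Rc s k.val + 1 ≤ Rc s k'.val := Rc_succ_le hf hkv
  have hcond : ¬ (s k.val = true ∧ (k : ℕ) < m - 1) := by simp [hf]
  rw [Fin.lt_def]
  unfold pos
  rw [if_neg hcond]
  split_ifs with h' <;> simp only <;> omega

lemma pos_injective (m : ℕ) (s : ℕ → Bool) : Function.Injective (pos m s) := by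
  intro k k' hpos
  by_contra hne
  rcases lt_or_gt_of_ne hne with h | h
  · cases ht : s k.val with
    | true => exact absurd hpos (ne_of_lt (pos_lt h ht))
    | false => exact absurd hpos.symm (ne_of_lt (pos_gt h ht))
  · cases ht : s k'.val with
    | true => exact absurd hpos.symm (ne_of_lt (pos_lt h ht))
    | false => exact absurd hpos (ne_of_lt (pos_gt h ht))

/-- `pos` as a permutation. -/
noncomputable def posPerm (m : ℕ) (s : ℕ → Bool) : Equiv.Perm (Fin m) :=
  Equiv.ofBijective (pos m s) (Finite.injective_iff_bijective.mp (pos_injective m s))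

@[simp] lemma posPerm_apply (m : ℕ) (s : ℕ → Bool) (k : Fin m) :
    posPerm m s k = pos m s k := rfl

/-- the single-peaked vote associated to a sign sequence. -/
noncomputable def Vs (m : ℕ) (s : ℕ → Bool) : Equiv.Perm (Fin m) :=
  Fin.revPerm * (posPerm m s)⁻¹

lemma Vs_sp (m : ℕ) (s : ℕ → Bool) : SPwrt (Vs m s) 1 := by
  rintro c1 c2 c3 ⟨h12, h23, hv1, hv3⟩
  simp only [Equiv.Perm.one_apply] at h12 h23
  set W := (posPerm m s)⁻¹ with hW
  have hv1' : W c2 < W c1 := by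
    have : (W c1).rev < (W c2).rev := hv1
    exact Fin.rev_lt_rev.mp this
  have hv3' : W c2 < W c3 := by
    have : (W c3).rev < (W c2).rev := hv3
    exact Fin.rev_lt_rev.mp this
  have hp1 : pos m s (W c1) = c1 := by
    rw [← posPerm_apply]; exact (posPerm m s).apply_symm_apply c1
  have hp2 : pos m s (W c2) = c2 := by
    rw [← posPerm_apply]; exact (posPerm m s).apply_symm_apply c2
  have hp3 : pos m s (W c3) = c3 := by
    rw [← posPerm_apply]; exact (posPerm m s).apply_symm_apply c3
  cases hb : s (W c2).val with
  | true =>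
      have := pos_lt hv1' hb
      rw [hp1, hp2] at this
      exact absurd h12 (asymm this)
  | false =>
      have := pos_gt hv3' hb
      rw [hp2, hp3] at this
      exact absurd h23 (asymm this)

end SPaux

namespace SPaux

lemma pos_val_true {m : ℕ} {s : ℕ → Bool} {k : Fin m} (h1 : s k.val = true)
    (h2 : (k : ℕ) < m - 1) : (pos m s k : ℕ) = Lc s k.val := by
  unfold pos; rw [if_pos ⟨h1, h2⟩]

lemma pos_val_else {m : ℕ} {s : ℕ → Bool} {k : Fin m}
    (h : ¬ (s k.val = true ∧ (k : ℕ) < m - 1)) :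
    (pos m s k : ℕ) = m - 1 - Rc s k.val := by
  unfold pos; rw [if_neg h]

/-- the distinguished "top" element `m-1` of `Fin m`. -/
def top (m : ℕ) (hm : 0 < m) : Fin m := ⟨m - 1, by omega⟩

lemma pos_lt_top_iff {m : ℕ} {s : ℕ → Bool} {k : Fin m} (hk : (k : ℕ) < m - 1) :
    s k.val = true ↔ pos m s k < pos m s (top m k.pos) := by
  constructor
  · intro ht
    exact pos_lt (by simpa [top, Fin.lt_def] using hk) ht
  · intro hlt
    cases ht : s k.val with
    | true => rfl
    | false =>
        exact absurd hlt (asymm (pos_gt (by simpa [top, Fin.lt_def] using hk) ht))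

/-- extend a sign vector on `Fin (m-1)` to `ℕ`. -/
def ext (m : ℕ) (s : Fin (m - 1) → Bool) : ℕ → Bool :=
  fun j => if h : j < m - 1 then s ⟨j, h⟩ else false

/-- the injection from sign vectors to single-peaked votes. -/
noncomputable def phi (m : ℕ) (s : Fin (m - 1) → Bool) : Equiv.Perm (Fin m) :=
  Vs m (ext m s)

lemma phi_sp (m : ℕ) (s : Fin (m - 1) → Bool) : SPwrt (phi m s) 1 := Vs_sp m (ext m s)

lemma phi_injective (m : ℕ) : Function.Injective (phi m) := by
  intro s t h
  unfold phi Vs at h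
  have h2 : (posPerm m (ext m s))⁻¹ = (posPerm m (ext m t))⁻¹ := mul_left_cancel h
  have hperm : posPerm m (ext m s) = posPerm m (ext m t) := inv_injective h2
  have hpos : ∀ k : Fin m, pos m (ext m s) k = pos m (ext m t) k := by
    intro k
    have := Equiv.ext_iff.mp hperm k
    rwa [posPerm_apply, posPerm_apply] at this
  funext k
  have hkm : (k : ℕ) < m - 1 := k.isLt
  set K : Fin m := ⟨k.val, by omega⟩ with hKdef
  have hK : (K : ℕ) < m - 1 := hkm
  have h1 : ext m s K.val = true ↔ ext m t K.val = true := by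
    rw [pos_lt_top_iff (s := ext m s) hK, pos_lt_top_iff (s := ext m t) hK,
      hpos, hpos]
  have hes : ext m s K.val = s k := by simp [ext, hKdef, hkm]
  have het : ext m t K.val = t k := by simp [ext, hKdef, hkm]
  rw [hes, het] at h1
  cases hb : s k with
  | true => exact (h1.mp hb).symm
  | false =>
      cases hb' : t k with
      | true => exact absurd (h1.mpr hb') (by simp [hb])
      | false => rfl

lemma revPerm_mul_revPerm (m : ℕ) :
    (Fin.revPerm : Equiv.Perm (Fin m)) * Fin.revPerm = 1 := by
  ext x; simp [Fin.rev_rev]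

lemma phi_const_true (m : ℕ) : phi m (fun _ => true) = Fin.revPerm := by
  have hpos : ∀ k : Fin m, (pos m (ext m (fun _ => true)) k : ℕ) = k.val := by
    intro k
    have hle : (k : ℕ) ≤ m - 1 := by have := k.isLt; omega
    rcases lt_or_eq_of_le hle with hk | hk
    · have hs : ext m (fun _ => true) k.val = true := by simp [ext, hk]
      have hall : ∀ j ∈ Finset.range k.val, ext m (fun _ => true) j = true := by
        intro j hj
        have : j < m - 1 := by have := Finset.mem_range.mp hj; omega
        simp [ext, this]
      have hL : Lc (ext m (fun _ => true)) k.val = k.val := by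
        rw [Lc, Finset.filter_true_of_mem hall, Finset.card_range]
      rw [pos_val_true hs hk, hL]
    · have hs : ¬ (ext m (fun _ => true) k.val = true ∧ (k : ℕ) < m - 1) :=
        fun hc => absurd hc.2 (by omega)
      have hR : Rc (ext m (fun _ => true)) k.val = 0 := by
        rw [Rc, Finset.card_eq_zero, Finset.filter_eq_empty_iff]
        intro j hj
        have : j < m - 1 := by have := Finset.mem_range.mp hj; omega
        simp [ext, this]
      rw [pos_val_else hs, hR]
      omega
  have hperm : posPerm m (ext m (fun _ => true)) = 1 := by
    apply Equiv.ext; intro k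
    apply Fin.ext
    rw [posPerm_apply, hpos k]
    rfl
  unfold phi Vs
  rw [hperm]
  simp

lemma phi_const_false (m : ℕ) : phi m (fun _ => false) = 1 := by
  have hext : ∀ j, ext m (fun _ => false) j = false := by
    intro j; simp [ext]
  have hpos : ∀ k : Fin m, (pos m (ext m (fun _ => false)) k : ℕ) = m - (k.val + 1) := by
    intro k
    have hs : ¬ (ext m (fun _ => false) k.val = true ∧ (k : ℕ) < m - 1) := by
      simp [hext]
    have hR : Rc (ext m (fun _ => false)) k.val = k.val := by
      rw [Rc]
      rw [Finset.filter_true_of_mem (by intro j hj; simp [hext])]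
      exact Finset.card_range _
    rw [pos_val_else hs, hR]
    have := k.isLt
    omega
  have hperm : posPerm m (ext m (fun _ => false)) = Fin.revPerm := by
    apply Equiv.ext; intro k
    apply Fin.ext
    rw [posPerm_apply, hpos k]
    simp [Fin.revPerm_apply, Fin.val_rev]
  unfold phi Vs
  rw [hperm]
  rw [← Fin.revPerm_symm]
  simp

end SPaux

namespace SPaux

lemma sp_transfer {m : ℕ} {V : Equiv.Perm (Fin m)} (h : SPwrt V 1) (A : Equiv.Perm (Fin m)) :
    SPwrt (V * A) A := by
  rintro c1 c2 c3 ⟨h1, h2, h3, h4⟩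
  exact h (A c1) (A c2) (A c3)
    ⟨by simpa using h1, by simpa using h2, by simpa using h3, by simpa using h4⟩

/-- the chosen family of `2^(m-1)` votes single-peaked w.r.t. axis `A`. -/
noncomputable def Scand (m : ℕ) (A : Equiv.Perm (Fin m)) : Finset (Equiv.Perm (Fin m)) :=
  (Finset.univ.image (phi m)).image (· * A)

lemma Scand_card (m : ℕ) (A : Equiv.Perm (Fin m)) : (Scand m A).card = 2 ^ (m - 1) := by
  rw [Scand, Finset.card_image_of_injective _ (mul_left_injective A),
    Finset.card_image_of_injective _ (phi_injective m), Finset.card_univ,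
    Fintype.card_fun]
  simp

lemma Scand_sp {m : ℕ} {A V : Equiv.Perm (Fin m)} (h : V ∈ Scand m A) : SPwrt V A := by
  obtain ⟨W, hW, rfl⟩ := Finset.mem_image.mp h
  obtain ⟨s, -, rfl⟩ := Finset.mem_image.mp hW
  exact sp_transfer (phi_sp m s) A

lemma A_mem_Scand (m : ℕ) (A : Equiv.Perm (Fin m)) : A ∈ Scand m A := by
  apply Finset.mem_image.mpr
  refine ⟨1, ?_, one_mul A⟩
  exact Finset.mem_image.mpr ⟨fun _ => false, Finset.mem_univ _, phi_const_false m⟩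

lemma revA_mem_Scand (m : ℕ) (A : Equiv.Perm (Fin m)) : Fin.revPerm * A ∈ Scand m A := by
  apply Finset.mem_image.mpr
  refine ⟨Fin.revPerm, ?_, rfl⟩
  exact Finset.mem_image.mpr ⟨fun _ => true, Finset.mem_univ _, phi_const_true m⟩

lemma IE {β : Type*} [DecidableEq β] (n : ℕ) (S : Finset β) {a b : β}
    (ha : a ∈ S) (hb : b ∈ S) (hab : a ≠ b) :
    ((Fintype.piFinset (fun _ : Fin n => S)).filter
        (fun P => (∃ i, P i = a) ∧ (∃ i, P i = b))).card
      + (S.card - 1) ^ n + (S.card - 1) ^ n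
    = S.card ^ n + (S.card - 2) ^ n := by
  have hcard : ∀ (T : Finset β), (Fintype.piFinset (fun _ : Fin n => T)).card = T.card ^ n := by
    intro T
    rw [Fintype.card_piFinset]
    simp
  obtain ⟨F, hF⟩ : ∃ F, F = Fintype.piFinset (fun _ : Fin n => S) := ⟨_, rfl⟩
  rw [← hF]
  have hca : (S.erase a).card = S.card - 1 := Finset.card_erase_of_mem ha
  have hcb : (S.erase b).card = S.card - 1 := Finset.card_erase_of_mem hb
  have hmem : b ∈ S.erase a := Finset.mem_erase.mpr ⟨hab.symm, hb⟩
  have hcab : ((S.erase a).erase b).card = S.card - 2 := by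
    rw [Finset.card_erase_of_mem hmem, hca]
    omega
  have hFa : F.filter (fun P => ¬ ∃ i, P i = a) = Fintype.piFinset (fun _ => S.erase a) := by
    ext P
    simp only [Finset.mem_filter, Fintype.mem_piFinset, Finset.mem_erase, not_exists, hF]
    constructor
    · rintro ⟨hP1, hP2⟩ i; exact ⟨hP2 i, hP1 i⟩
    · intro hP; exact ⟨fun i => (hP i).2, fun i => (hP i).1⟩
  have hFb : F.filter (fun P => ¬ ∃ i, P i = b) = Fintype.piFinset (fun _ => S.erase b) := by
    ext P
    simp only [Finset.mem_filter, Fintype.mem_piFinset, Finset.mem_erase, not_exists, hF]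
    constructor
    · rintro ⟨hP1, hP2⟩ i; exact ⟨hP2 i, hP1 i⟩
    · intro hP; exact ⟨fun i => (hP i).2, fun i => (hP i).1⟩
  have hFab : F.filter (fun P => (¬ ∃ i, P i = a) ∧ ¬ ∃ i, P i = b)
      = Fintype.piFinset (fun _ => (S.erase a).erase b) := by
    ext P
    simp only [Finset.mem_filter, Fintype.mem_piFinset, Finset.mem_erase, not_exists, hF]
    constructor
    · rintro ⟨hP1, hP2, hP3⟩ i; exact ⟨hP3 i, hP2 i, hP1 i⟩
    · intro hP; exact ⟨fun i => (hP i).2.2, fun i => (hP i).2.1, fun i => (hP i).1⟩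
  have e1 := Finset.card_filter_add_card_filter_not
      (s := F) (p := fun P => (∃ i, P i = a) ∧ (∃ i, P i = b))
  have e2 : F.filter (fun P => ¬ ((∃ i, P i = a) ∧ (∃ i, P i = b)))
      = F.filter (fun P => ¬ ∃ i, P i = a) ∪ F.filter (fun P => ¬ ∃ i, P i = b) := by
    ext P
    simp only [Finset.mem_filter, Finset.mem_union, not_and_or]
    tauto
  have e3 := Finset.card_union_add_card_inter
      (F.filter (fun P => ¬ ∃ i, P i = a)) (F.filter (fun P => ¬ ∃ i, P i = b))
  have e4 : F.filter (fun P => ¬ ∃ i, P i = a) ∩ F.filter (fun P => ¬ ∃ i, P i = b)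
      = F.filter (fun P => (¬ ∃ i, P i = a) ∧ ¬ ∃ i, P i = b) := by
    ext P
    simp only [Finset.mem_filter, Finset.mem_inter]
    tauto
  have cA : (F.filter (fun P => ¬ ∃ i, P i = a)).card = (S.card - 1) ^ n := by
    rw [hFa, hcard, hca]
  have cB : (F.filter (fun P => ¬ ∃ i, P i = b)).card = (S.card - 1) ^ n := by
    rw [hFb, hcard, hcb]
  have cAB : (F.filter (fun P => (¬ ∃ i, P i = a) ∧ ¬ ∃ i, P i = b)).card
      = (S.card - 2) ^ n := by
    rw [hFab, hcard, hcab]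
  have eF : F.card = S.card ^ n := by rw [hF]; exact hcard S
  rw [e2] at e1
  rw [e4, cAB, cA, cB] at e3
  -- e1 : cE + u = F.card ;  e3 : u + (S.card-2)^n = (S.card-1)^n + (S.card-1)^n
  rw [add_assoc, ← e3, ← add_assoc, e1, eF]

end SPaux

namespace SPaux

lemma perm_eq_one_of_mono {m : ℕ} (U : Equiv.Perm (Fin m))
    (h : ∀ i j : Fin m, i < j → U i < U j) : U = 1 := by
  have hval : ∀ (W : Equiv.Perm (Fin m)), (∀ i j : Fin m, i < j → W i < W j) →
      ∀ v, ∀ hv : v < m, v ≤ (W ⟨v, hv⟩ : ℕ) := by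
    intro W hW v
    induction v with
    | zero => intro hv; exact Nat.zero_le _
    | succ v ih =>
        intro hv
        have h1 : (⟨v, by omega⟩ : Fin m) < ⟨v + 1, hv⟩ := by simp [Fin.lt_def]
        have h2 : (W ⟨v, by omega⟩ : ℕ) < (W ⟨v + 1, hv⟩ : ℕ) := hW _ _ h1
        have h3 := ih (by omega)
        omega
  have hinv : ∀ i j : Fin m, i < j → U⁻¹ i < U⁻¹ j := by
    intro i j hij
    rcases lt_trichotomy (U⁻¹ i) (U⁻¹ j) with h' | h' | h'
    · exact h'
    · have : i = j := by
        have := congrArg U h'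
        simpa using this
      exact absurd this (ne_of_lt hij)
    · have h2 := h _ _ h'
      rw [perm_apply_inv_self, perm_apply_inv_self] at h2
      exact absurd hij (asymm h2)
  apply Equiv.ext; intro k
  have h1 : (k : ℕ) ≤ (U k : ℕ) := by
    have := hval U h k.val k.isLt
    simpa using this
  have h2 : (U k : ℕ) ≤ (k : ℕ) := by
    have := hval U⁻¹ hinv (U k).val (U k).isLt
    simpa using this
  have : U k = k := Fin.ext (le_antisymm h2 h1)
  simpa using this

lemma axis_det {m : ℕ} (hm : 2 ≤ m) (V B : Equiv.Perm (Fin m))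
    (h1 : SPwrt V B) (h2 : SPwrt (Fin.revPerm * V) B) :
    V = B ∨ V = Fin.revPerm * B := by
  have main : ∀ W : Equiv.Perm (Fin m), SPwrt W B → SPwrt (Fin.revPerm * W) B →
      (W * B⁻¹) ⟨0, by omega⟩ < (W * B⁻¹) ⟨1, by omega⟩ → W = B := by
    intro W hw1 hw2 hlt
    set U := W * B⁻¹ with hU
    have hUapp : ∀ x : Fin m, W (B⁻¹ x) = U x := fun x => rfl
    have hT : ∀ a b c : Fin m, a < b → b < c → U a < U b → U b < U c := by
      intro a b c hab hbc h3
      have hsp := hw1 (B⁻¹ a) (B⁻¹ b) (B⁻¹ c)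
      simp only [perm_apply_inv_self] at hsp
      simp only [hUapp] at hsp
      push_neg at hsp
      have h4 := hsp hab hbc h3
      have hne : U b ≠ U c := fun he => (ne_of_lt hbc) (Equiv.injective U he)
      exact lt_of_le_of_ne h4 hne
    have hT' : ∀ a b c : Fin m, a < b → b < c → U b < U c → U a < U b := by
      intro a b c hab hbc h3
      by_contra hcon
      have hne : U a ≠ U b := fun he => (ne_of_lt hab) (Equiv.injective U he)
      have h5 : U b < U a := lt_of_le_of_ne (not_lt.mp hcon) (Ne.symm hne)
      have hsp := hw2 (B⁻¹ a) (B⁻¹ b) (B⁻¹ c)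
      simp only [Equiv.Perm.mul_apply, perm_apply_inv_self,
        Fin.revPerm_apply, Fin.rev_lt_rev] at hsp
      simp only [hUapp] at hsp
      push_neg at hsp
      exact absurd h3 (not_lt.mpr (hsp hab hbc h5))
    have hzo : (⟨0, by omega⟩ : Fin m) < ⟨1, by omega⟩ := by simp [Fin.lt_def]
    have hz : ∀ j : Fin m, (⟨0, by omega⟩ : Fin m) < j →
        U ⟨0, by omega⟩ < U j := by
      intro j hj
      rcases lt_trichotomy (⟨1, by omega⟩ : Fin m) j with h' | h' | h'
      · exact hlt.trans (hT _ _ _ hzo h' hlt)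
      · rw [← h']; exact hlt
      · exfalso
        rw [Fin.lt_def] at h' hj
        simp at h' hj
        omega
    have hmono : ∀ i j : Fin m, i < j → U i < U j := by
      intro i j hij
      rcases eq_or_lt_of_le (show (⟨0, by omega⟩ : Fin m) ≤ i by
        rw [Fin.le_def]; exact Nat.zero_le _) with h' | h'
      · rw [← h']
        exact hz j (h' ▸ hij)
      · exact hT _ _ _ h' hij (hz i h')
    have hUone : U = 1 := perm_eq_one_of_mono U hmono
    exact mul_inv_eq_one.mp hUone
  rcases lt_trichotomy ((V * B⁻¹) ⟨0, by omega⟩) ((V * B⁻¹) ⟨1, by omega⟩) with hc | hc | hc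
  · exact Or.inl (main V h1 h2 hc)
  · exfalso
    have : (⟨0, by omega⟩ : Fin m) = (⟨1, by omega⟩ : Fin m) := Equiv.injective _ hc
    simp [Fin.ext_iff] at this
  · right
    have hrr := revPerm_mul_revPerm m
    have h2' : SPwrt (Fin.revPerm * (Fin.revPerm * V)) B := by
      rw [← mul_assoc, hrr, one_mul]; exact h1
    have hlt' : ((Fin.revPerm * V) * B⁻¹ : Equiv.Perm (Fin m)) ⟨0, by omega⟩
        < ((Fin.revPerm * V) * B⁻¹ : Equiv.Perm (Fin m)) ⟨1, by omega⟩ := by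
      show ((V * B⁻¹) (⟨0, by omega⟩ : Fin m)).rev < ((V * B⁻¹) (⟨1, by omega⟩ : Fin m)).rev
      exact Fin.rev_lt_rev.mpr hc
    have hres := main (Fin.revPerm * V) h2 h2' hlt'
    rw [← hres, ← mul_assoc, hrr, one_mul]

end SPaux

namespace SPaux

/-- elections single-peaked w.r.t. `A` containing both `A` and its reverse. -/
noncomputable def EE (n m : ℕ) (A : Equiv.Perm (Fin m)) :
    Finset (Fin n → Equiv.Perm (Fin m)) :=
  Finset.univ.filter (fun P => (∀ i, SPwrt (P i) A) ∧ (∃ i, P i = A) ∧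
    (∃ i, P i = Fin.revPerm * A))

lemma EE_lower (n m : ℕ) (hm : 2 ≤ m) (A : Equiv.Perm (Fin m)) :
    (2 ^ (m - 1)) ^ n + (2 ^ (m - 1) - 2) ^ n
      ≤ (EE n m A).card + ((2 ^ (m - 1) - 1) ^ n + (2 ^ (m - 1) - 1) ^ n) := by
  have hab : A ≠ Fin.revPerm * A := by
    intro hcontra
    have hx := congrArg (fun σ : Equiv.Perm (Fin m) => σ (A⁻¹ ⟨0, by omega⟩)) hcontra
    simp only [Equiv.Perm.mul_apply, perm_apply_inv_self, Fin.revPerm_apply] at hx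
    have hv := congrArg Fin.val hx
    rw [Fin.val_rev] at hv
    simp at hv
    omega
  have hIE := IE n (Scand m A) (A_mem_Scand m A) (revA_mem_Scand m A) hab
  rw [Scand_card] at hIE
  have hsub : (Fintype.piFinset (fun _ : Fin n => Scand m A)).filter
      (fun P => (∃ i, P i = A) ∧ (∃ i, P i = Fin.revPerm * A)) ⊆ EE n m A := by
    intro P hP
    rw [Finset.mem_filter] at hP
    obtain ⟨hP1, hP2⟩ := hP
    rw [EE, Finset.mem_filter]
    exact ⟨Finset.mem_univ _,
      fun i => Scand_sp (Fintype.mem_piFinset.mp hP1 i), hP2.1, hP2.2⟩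
  have hle := Finset.card_le_card hsub
  calc (2 ^ (m - 1)) ^ n + (2 ^ (m - 1) - 2) ^ n
      = _ + (2 ^ (m - 1) - 1) ^ n + (2 ^ (m - 1) - 1) ^ n := hIE.symm
    _ ≤ (EE n m A).card + (2 ^ (m - 1) - 1) ^ n + (2 ^ (m - 1) - 1) ^ n := by
        exact Nat.add_le_add_right (Nat.add_le_add_right hle _) _
    _ = (EE n m A).card + ((2 ^ (m - 1) - 1) ^ n + (2 ^ (m - 1) - 1) ^ n) := by
        rw [add_assoc]

lemma EE_double (n m : ℕ) (hm : 2 ≤ m) :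
    ∑ A : Equiv.Perm (Fin m), (EE n m A).card
      ≤ 2 * (Finset.univ.filter
          (fun P : Fin n → Equiv.Perm (Fin m) => SPElection P)).card := by
  calc ∑ A : Equiv.Perm (Fin m), (EE n m A).card
      = ∑ A : Equiv.Perm (Fin m), ∑ P : Fin n → Equiv.Perm (Fin m),
          if ((∀ i, SPwrt (P i) A) ∧ (∃ i, P i = A) ∧ (∃ i, P i = Fin.revPerm * A))
          then 1 else 0 := by
        refine Finset.sum_congr rfl fun A _ => ?_
        rw [EE, Finset.card_filter]
    _ = ∑ P : Fin n → Equiv.Perm (Fin m), ∑ A : Equiv.Perm (Fin m),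
          if ((∀ i, SPwrt (P i) A) ∧ (∃ i, P i = A) ∧ (∃ i, P i = Fin.revPerm * A))
          then 1 else 0 := Finset.sum_comm
    _ ≤ ∑ P : Fin n → Equiv.Perm (Fin m), 2 * (if SPElection P then 1 else 0) := by
        refine Finset.sum_le_sum fun P _ => ?_
        rw [← Finset.card_filter]
        rcases Finset.eq_empty_or_nonempty (Finset.univ.filter
            (fun A : Equiv.Perm (Fin m) => (∀ i, SPwrt (P i) A) ∧ (∃ i, P i = A) ∧
              (∃ i, P i = Fin.revPerm * A))) with he | ⟨A₀, hA₀⟩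
        · rw [he]
          simp
        · rw [Finset.mem_filter] at hA₀
          obtain ⟨-, hsp, hexA, hexB⟩ := hA₀
          have hSP : SPElection P := ⟨A₀, hsp⟩
          rw [if_pos hSP]
          have hsub : Finset.univ.filter
              (fun A : Equiv.Perm (Fin m) => (∀ i, SPwrt (P i) A) ∧ (∃ i, P i = A) ∧
                (∃ i, P i = Fin.revPerm * A)) ⊆ {A₀, Fin.revPerm * A₀} := by
            intro B hB
            rw [Finset.mem_filter] at hB
            obtain ⟨-, hspB, -, -⟩ := hB
            obtain ⟨i₀, hi₀⟩ := hexA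
            obtain ⟨i₁, hi₁⟩ := hexB
            have hA0B : SPwrt A₀ B := hi₀ ▸ hspB i₀
            have hrevB : SPwrt (Fin.revPerm * A₀) B := hi₁ ▸ hspB i₁
            rcases axis_det hm A₀ B hA0B hrevB with h' | h'
            · exact Finset.mem_insert.mpr (Or.inl h'.symm)
            · have hBval : B = Fin.revPerm * A₀ := by
                rw [h', ← mul_assoc, revPerm_mul_revPerm, one_mul]
              simp [Finset.mem_insert, hBval]
          have hc2 : (Finset.univ.filter
              (fun A : Equiv.Perm (Fin m) => (∀ i, SPwrt (P i) A) ∧ (∃ i, P i = A) ∧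
                (∃ i, P i = Fin.revPerm * A))).card ≤ 2 :=
            le_trans (Finset.card_le_card hsub)
              (le_trans (Finset.card_insert_le _ _) (by simp))
          simpa using hc2
    _ = 2 * ∑ P : Fin n → Equiv.Perm (Fin m), (if SPElection P then 1 else 0) := by
        rw [Finset.mul_sum]
    _ = 2 * (Finset.univ.filter
          (fun P : Fin n → Equiv.Perm (Fin m) => SPElection P)).card := by
        rw [Finset.card_filter]

end SPaux


open SPaux

/-- Lower bound on the number of single-peaked `(n,m)`-elections:
`a(n,m) ≥ (m!/2)·(2^((m-1)n) + (2^(m-1)−2)^n − 2·(2^(m-1)−1)^n)` for `n, m ≥ 2`. -/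
theorem count_single_peaked_lower (n m : ℕ) (hn : 2 ≤ n) (hm : 2 ≤ m) :
    ((Nat.factorial m : ℝ) / 2) *
        ((2 : ℝ) ^ ((m - 1) * n) + ((2 : ℝ) ^ (m - 1) - 2) ^ n
          - 2 * ((2 : ℝ) ^ (m - 1) - 1) ^ n)
      ≤ ({P : Fin n → Equiv.Perm (Fin m) | SPElection P}.ncard : ℝ) := by
  have hs2 : 2 ≤ 2 ^ (m - 1) := by
    have h := Nat.pow_le_pow_right (show 1 ≤ 2 by norm_num) (show 1 ≤ m - 1 by omega)
    simpa using h
  have hcp : Fintype.card (Equiv.Perm (Fin m)) = Nat.factorial m := by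
    rw [Fintype.card_perm, Fintype.card_fin]
  have hsum : Nat.factorial m * ((2 ^ (m - 1)) ^ n + (2 ^ (m - 1) - 2) ^ n)
      ≤ (∑ A : Equiv.Perm (Fin m), (EE n m A).card)
        + Nat.factorial m * ((2 ^ (m - 1) - 1) ^ n + (2 ^ (m - 1) - 1) ^ n) := by
    calc Nat.factorial m * ((2 ^ (m - 1)) ^ n + (2 ^ (m - 1) - 2) ^ n)
        = ∑ _A : Equiv.Perm (Fin m), ((2 ^ (m - 1)) ^ n + (2 ^ (m - 1) - 2) ^ n) := by
          rw [Finset.sum_const, smul_eq_mul, Finset.card_univ, hcp]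
      _ ≤ ∑ A : Equiv.Perm (Fin m), ((EE n m A).card
            + ((2 ^ (m - 1) - 1) ^ n + (2 ^ (m - 1) - 1) ^ n)) :=
          Finset.sum_le_sum fun A _ => EE_lower n m hm A
      _ = (∑ A : Equiv.Perm (Fin m), (EE n m A).card)
            + ∑ _A : Equiv.Perm (Fin m), ((2 ^ (m - 1) - 1) ^ n + (2 ^ (m - 1) - 1) ^ n) :=
          Finset.sum_add_distrib
      _ = (∑ A : Equiv.Perm (Fin m), (EE n m A).card)
            + Nat.factorial m * ((2 ^ (m - 1) - 1) ^ n + (2 ^ (m - 1) - 1) ^ n) := by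
          rw [Finset.sum_const, smul_eq_mul, Finset.card_univ, hcp]
  have KEY : Nat.factorial m * ((2 ^ (m - 1)) ^ n + (2 ^ (m - 1) - 2) ^ n)
      ≤ 2 * (Finset.univ.filter
            (fun P : Fin n → Equiv.Perm (Fin m) => SPElection P)).card
        + Nat.factorial m * ((2 ^ (m - 1) - 1) ^ n + (2 ^ (m - 1) - 1) ^ n) :=
    le_trans hsum (Nat.add_le_add_right (EE_double n m hm) _)
  have hset : {P : Fin n → Equiv.Perm (Fin m) | SPElection P}
      = ↑(Finset.univ.filter (fun P : Fin n → Equiv.Perm (Fin m) => SPElection P)) := by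
    ext P
    simp
  rw [hset, Set.ncard_coe_finset]
  have cs : ((2 ^ (m - 1) : ℕ) : ℝ) = (2 : ℝ) ^ (m - 1) := by push_cast; ring
  have c1 : ((2 ^ (m - 1) - 1 : ℕ) : ℝ) = (2 : ℝ) ^ (m - 1) - 1 := by
    rw [Nat.cast_sub (by omega), cs, Nat.cast_one]
  have c2 : ((2 ^ (m - 1) - 2 : ℕ) : ℝ) = (2 : ℝ) ^ (m - 1) - 2 := by
    rw [Nat.cast_sub (by omega), cs]
    norm_num
  have KEYR := (Nat.cast_le (α := ℝ)).mpr KEY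
  push_cast [c1, c2, cs] at KEYR
  rw [pow_mul]
  ring_nf at KEYR ⊢
  linarith [KEYR]
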